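/- arXiv:2107.07593 — 4 statements merged into one kernel-verified Lean document; each statement's English description precedes it below -/
import Mathlib

section
/- Well-posedness (stability) of Bayesian filtering (Theorem 3.5): For every R > 0 there exists a constant C > 0, depending only on R, the noise density ρ and its constants, N, B, m₁, T and the norms ‖L_j‖_{L²(μ_prior)}, such that for all measurement vectors y, y' ∈ (ℝ^d)^N with |y|_Γ ≤ R and |y'|_Γ ≤ R one has: (i) W1(ν^y_t, ν^{y'}_t) ≤ C |y − y'|_Γ for every t ∈ [0,T]; and (ii) ∫₀ᵀ W1(ν^y_t, ν^{y'}_t) dt ≤ C·T·|y − y'|_Γ. -/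
open MeasureTheory
open scoped BigOperators ENNReal Matrix

noncomputable section

/-- The Γ-weighted norm `|y|_Γ = sqrt ⟨y, Γ⁻¹ y⟩` on `ℝ^d`. -/
def gammaNorm {d : ℕ} (Γ : Matrix (Fin d) (Fin d) ℝ) (y : Fin d → ℝ) : ℝ :=
  Real.sqrt (y ⬝ᵥ (Γ⁻¹).mulVec y)

/-- The Γ-norm of a tuple of measurements: `(Σ_k |y_k|_Γ²)^{1/2}`. -/
def gammaNormTuple {d N : ℕ} (Γ : Matrix (Fin d) (Fin d) ℝ) (y : Fin N → Fin d → ℝ) : ℝ :=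
  Real.sqrt (∑ k, (gammaNorm Γ (y k)) ^ 2)

/-- A noise density satisfying (N.1)–(N.3). -/
structure IsNoiseDensity {d : ℕ} (Γ : Matrix (Fin d) (Fin d) ℝ) (ρ : (Fin d → ℝ) → ℝ)
    (Lρ Cb Ct : ℝ) : Prop where
  Lρ_pos : 0 < Lρ
  Cb_pos : 0 < Cb
  Ct_pos : 0 < Ct
  pos : ∀ y, 0 < ρ y
  lip : ∀ y y', |ρ y - ρ y'| ≤ Lρ * gammaNorm Γ (y - y')
  bdd : ∀ y, ρ y ≤ Cb
  tail : ∀ y, Ct⁻¹ * Real.exp (-(1 / 2) * (gammaNorm Γ y) ^ 2) ≤ ρ y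

/-- Wasserstein-1 distance in Kantorovich–Rubinstein dual form. -/
def W1 {X : Type*} [NormedAddCommGroup X] [MeasurableSpace X] (μ ν : Measure X) : ℝ :=
  sSup {r : ℝ | ∃ Φ : X → ℝ, LipschitzWith 1 Φ ∧ Φ 0 = 0 ∧
    r = (∫ u, Φ u ∂μ) - ∫ u, Φ u ∂ν}

/-- Unnormalized posterior density given the first `k` measurements. -/
def postDensity {X : Type*} {d N : ℕ} (ρ : (Fin d → ℝ) → ℝ)
    (L : Fin N → X → Fin d → ℝ) (y : Fin N → Fin d → ℝ) (k : ℕ) (u : X) : ℝ :=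
  ∏ j ∈ Finset.univ.filter (fun j : Fin N => (j : ℕ) < k), ρ (y j - L j u)

/-- Normalization constant `Z_k(y_{1:k})`. -/
def postZ {X : Type*} [MeasurableSpace X] {d N : ℕ} (μp : Measure X) (ρ : (Fin d → ℝ) → ℝ)
    (L : Fin N → X → Fin d → ℝ) (y : Fin N → Fin d → ℝ) (k : ℕ) : ℝ :=
  ∫ u, postDensity ρ L y k u ∂μp

/-- Bayesian posterior `μ^{y_{1:k}}` on the initial data. -/
def posteriorK {X : Type*} [MeasurableSpace X] {d N : ℕ} (μp : Measure X)
    (ρ : (Fin d → ℝ) → ℝ) (L : Fin N → X → Fin d → ℝ) (y : Fin N → Fin d → ℝ) (k : ℕ) :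
    Measure X :=
  μp.withDensity fun u => ENNReal.ofReal (postDensity ρ L y k u / postZ μp ρ L y k)

/-- The number of measurement times `t_j` (j = 1, …, N) with `t_j ≤ t`; for
`t ∈ [t_k, t_{k+1})` this equals `k`, and it equals `N` for `t = t_N = T`. -/
def numObs {N : ℕ} (ts : Fin (N + 1) → ℝ) (t : ℝ) : ℕ :=
  (Finset.univ.filter (fun j : Fin N => ts j.succ ≤ t)).card

/-- The filtering distribution `ν^y_t = (S_t)_# μ^{y_{1:k}}` for `t ∈ [t_k, t_{k+1})`. -/
def filteringDist {X : Type*} [MeasurableSpace X] {d N : ℕ} (μp : Measure X)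
    (ρ : (Fin d → ℝ) → ℝ) (ts : Fin (N + 1) → ℝ) (S : ℝ → X → X)
    (L : Fin N → X → Fin d → ℝ) (y : Fin N → Fin d → ℝ) (t : ℝ) : Measure X :=
  (posteriorK μp ρ L y (numObs ts t)).map (S t)

section Aux

open Filter Topology

lemma abs_prod_sub_prod_le' {ι : Type*} (F : Finset ι) (a b : ι → ℝ) {P : ℝ}
    (hP : 1 ≤ P) (ha0 : ∀ i, 0 ≤ a i) (haP : ∀ i, a i ≤ P)
    (hb0 : ∀ i, 0 ≤ b i) (hbP : ∀ i, b i ≤ P) :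
    |∏ i ∈ F, a i - ∏ i ∈ F, b i| ≤ P ^ F.card * ∑ i ∈ F, |a i - b i| := by
  classical
  induction F using Finset.induction_on with
  | empty => simp
  | @insert i F hiF ih =>
    rw [Finset.prod_insert hiF, Finset.prod_insert hiF, Finset.sum_insert hiF,
      Finset.card_insert_of_notMem hiF]
    have hP0 : (0:ℝ) < P := lt_of_lt_of_le one_pos hP
    have hPc : (0:ℝ) < P ^ F.card := pow_pos hP0 _
    have hprodb : ∏ j ∈ F, b j ≤ P ^ F.card := by
      calc ∏ j ∈ F, b j ≤ ∏ _j ∈ F, P :=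
            Finset.prod_le_prod (fun j _ => hb0 j) (fun j _ => hbP j)
        _ = P ^ F.card := Finset.prod_const P
    have key : a i * ∏ j ∈ F, a j - b i * ∏ j ∈ F, b j
        = a i * (∏ j ∈ F, a j - ∏ j ∈ F, b j) + (a i - b i) * ∏ j ∈ F, b j := by ring
    rw [key]
    have h1 : |a i * (∏ j ∈ F, a j - ∏ j ∈ F, b j)| ≤ P * (P ^ F.card * ∑ j ∈ F, |a j - b j|) := by
      rw [abs_mul, abs_of_nonneg (ha0 i)]
      exact mul_le_mul (haP i) ih (abs_nonneg _) hP0.le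
    have h2 : |(a i - b i) * ∏ j ∈ F, b j| ≤ |a i - b i| * P ^ F.card := by
      rw [abs_mul, abs_of_nonneg (Finset.prod_nonneg fun j _ => hb0 j)]
      exact mul_le_mul_of_nonneg_left hprodb (abs_nonneg _)
    calc |a i * (∏ j ∈ F, a j - ∏ j ∈ F, b j) + (a i - b i) * ∏ j ∈ F, b j|
        ≤ |a i * (∏ j ∈ F, a j - ∏ j ∈ F, b j)| + |(a i - b i) * ∏ j ∈ F, b j| := abs_add_le _ _
      _ ≤ P * (P ^ F.card * ∑ j ∈ F, |a j - b j|) + |a i - b i| * P ^ F.card :=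
          add_le_add h1 h2
      _ ≤ P ^ (F.card + 1) * (|a i - b i| + ∑ j ∈ F, |a j - b j|) := by
          rw [pow_succ]
          nlinarith [mul_nonneg (mul_nonneg hPc.le (abs_nonneg (a i - b i))) (sub_nonneg.mpr hP)]

lemma continuous_quadForm' {d : ℕ} (M : Matrix (Fin d) (Fin d) ℝ) :
    Continuous fun v : Fin d → ℝ => v ⬝ᵥ M.mulVec v := by
  simp only [dotProduct, Matrix.mulVec]
  exact continuous_finset_sum _ fun i _ =>
    (continuous_apply i).mul (continuous_finset_sum _ fun j _ =>
      (continuous_const.mul (continuous_apply j)))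

lemma continuous_gammaNorm' {d : ℕ} (Γ : Matrix (Fin d) (Fin d) ℝ) :
    Continuous fun v : Fin d → ℝ => gammaNorm Γ v :=
  Real.continuous_sqrt.comp (continuous_quadForm' _)

lemma IsNoiseDensity.continuous {d : ℕ} {Γ : Matrix (Fin d) (Fin d) ℝ}
    {ρ : (Fin d → ℝ) → ℝ} {Lρ Cb Ct : ℝ} (hρ : IsNoiseDensity Γ ρ Lρ Cb Ct) :
    Continuous ρ := by
  rw [continuous_iff_continuousAt]
  intro y₀
  rw [ContinuousAt, tendsto_iff_dist_tendsto_zero]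
  have h0 : Tendsto (fun y => Lρ * gammaNorm Γ (y - y₀)) (𝓝 y₀) (𝓝 0) := by
    have hc : Continuous fun y : Fin d → ℝ => Lρ * gammaNorm Γ (y - y₀) :=
      continuous_const.mul ((continuous_gammaNorm' Γ).comp (continuous_id.sub continuous_const))
    have h := hc.tendsto y₀
    simpa [gammaNorm] using h
  exact squeeze_zero (fun y => dist_nonneg)
    (fun y => by rw [Real.dist_eq]; exact hρ.lip y y₀) h0

end Aux

/-- **Theorem 3.5 (well-posedness / stability of Bayesian filtering).** -/
theorem filtering_wellposedness
    {X : Type*} [NormedAddCommGroup X] [NormedSpace ℝ X] [CompleteSpace X]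
    [TopologicalSpace.SeparableSpace X] [MeasurableSpace X] [BorelSpace X]
    {d N : ℕ} (hN : 0 < N)
    (Γ : Matrix (Fin d) (Fin d) ℝ) (hΓ : Γ.PosDef)
    (ρ : (Fin d → ℝ) → ℝ) (Lρ Cb Ct : ℝ) (hρ : IsNoiseDensity Γ ρ Lρ Cb Ct)
    (μp : Measure X) [IsProbabilityMeasure μp]
    (hmom : Integrable (fun u => ‖u‖) μp)
    (T : ℝ) (hT : 0 < T)
    (ts : Fin (N + 1) → ℝ) (hts : StrictMono ts)
    (hts0 : ts 0 = 0) (htsN : ts (Fin.last N) = T)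
    (S : ℝ → X → X) (hSmeas : Measurable fun p : ℝ × X => S p.1 p.2)
    (B : ℝ) (hB : 0 < B)
    (hSbd : ∀ t ∈ Set.Icc (0 : ℝ) T, ∀ u : X, ‖S t u‖ ≤ B * ‖u‖)
    (L : Fin N → X → Fin d → ℝ) (hLmeas : ∀ j, Measurable (L j))
    (hL2 : ∀ j, Integrable (fun u => (gammaNorm Γ (L j u)) ^ 2) μp) :
    ∀ R > 0, ∃ C > 0,
      ∀ y y' : Fin N → Fin d → ℝ,
        gammaNormTuple Γ y ≤ R → gammaNormTuple Γ y' ≤ R →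
        (∀ t ∈ Set.Icc (0 : ℝ) T,
          W1 (filteringDist μp ρ ts S L y t) (filteringDist μp ρ ts S L y' t)
            ≤ C * gammaNormTuple Γ (y - y')) ∧
        (∫ t in (0 : ℝ)..T,
            W1 (filteringDist μp ρ ts S L y t) (filteringDist μp ρ ts S L y' t))
          ≤ C * T * gammaNormTuple Γ (y - y') := by
  intro R hR
  obtain ⟨hLρ, hCb, hCt, hpos, hlip, hbdd, htail⟩ := hρ
  have hρcont : Continuous ρ := IsNoiseDensity.continuous ⟨hLρ, hCb, hCt, hpos, hlip, hbdd, htail⟩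
  have hρmeas : Measurable ρ := hρcont.measurable
  -- quadratic form facts
  have hQnn : ∀ v : Fin d → ℝ, 0 ≤ v ⬝ᵥ (Γ⁻¹).mulVec v := fun v => by
    simpa using hΓ.inv.posSemidef.dotProduct_mulVec_nonneg v
  have hgn_nn : ∀ v : Fin d → ℝ, 0 ≤ gammaNorm Γ v := fun v => Real.sqrt_nonneg _
  have hgn_sq : ∀ v : Fin d → ℝ, gammaNorm Γ v ^ 2 = v ⬝ᵥ (Γ⁻¹).mulVec v := fun v =>
    Real.sq_sqrt (hQnn v)
  have hpar : ∀ a b : Fin d → ℝ,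
      gammaNorm Γ (a - b) ^ 2 ≤ 2 * gammaNorm Γ a ^ 2 + 2 * gammaNorm Γ b ^ 2 := by
    intro a b
    have hid : (a - b) ⬝ᵥ (Γ⁻¹).mulVec (a - b) + (a + b) ⬝ᵥ (Γ⁻¹).mulVec (a + b)
        = 2 * (a ⬝ᵥ (Γ⁻¹).mulVec a) + 2 * (b ⬝ᵥ (Γ⁻¹).mulVec b) := by
      simp only [Matrix.mulVec_sub, Matrix.mulVec_add, dotProduct_sub,
        dotProduct_add, sub_dotProduct, add_dotProduct]
      ring
    have h2 := hQnn (a + b)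
    rw [hgn_sq, hgn_sq, hgn_sq]
    linarith
  have hgnt_nn : ∀ v : Fin N → Fin d → ℝ, 0 ≤ gammaNormTuple Γ v := fun v => Real.sqrt_nonneg _
  have hgnt_sq : ∀ v : Fin N → Fin d → ℝ,
      gammaNormTuple Γ v ^ 2 = ∑ k, gammaNorm Γ (v k) ^ 2 :=
    fun v => Real.sq_sqrt (Finset.sum_nonneg fun k _ => sq_nonneg _)
  have hgn_le_gnt : ∀ (v : Fin N → Fin d → ℝ) (j : Fin N),
      gammaNorm Γ (v j) ≤ gammaNormTuple Γ v := by
    intro v j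
    rw [gammaNormTuple, show gammaNorm Γ (v j) = Real.sqrt (gammaNorm Γ (v j) ^ 2) from
      (Real.sqrt_sq (hgn_nn _)).symm]
    exact Real.sqrt_le_sqrt (Finset.single_le_sum (f := fun k => gammaNorm Γ (v k) ^ 2) (fun k _ => sq_nonneg _) (Finset.mem_univ j))
  -- constants
  obtain ⟨P, hPdef⟩ : ∃ P : ℝ, P = max 1 Cb := ⟨_, rfl⟩
  have hP1 : 1 ≤ P := by rw [hPdef]; exact le_max_left _ _
  have hP0 : (0:ℝ) < P := lt_of_lt_of_le one_pos hP1
  have hρle : ∀ z, ρ z ≤ P := fun z => (hbdd z).trans (by rw [hPdef]; exact le_max_right _ _)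
  obtain ⟨c₀, hc0def⟩ : ∃ c : ℝ, c = min 1 Ct⁻¹ := ⟨_, rfl⟩
  have hc0pos : 0 < c₀ := by rw [hc0def]; exact lt_min one_pos (inv_pos.mpr hCt)
  have hc0le1 : c₀ ≤ 1 := by rw [hc0def]; exact min_le_left _ _
  have hc0leCt : c₀ ≤ Ct⁻¹ := by rw [hc0def]; exact min_le_right _ _
  obtain ⟨G, hGdef⟩ : ∃ G : X → ℝ, G = fun u => ∑ j, gammaNorm Γ (L j u) ^ 2 := ⟨_, rfl⟩
  have hGnn : ∀ u, 0 ≤ G u := fun u => by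
    rw [hGdef]; exact Finset.sum_nonneg fun j _ => sq_nonneg _
  have hGeq : ∀ u, G u = ∑ j, gammaNorm Γ (L j u) ^ 2 := fun u => by rw [hGdef]
  have hGmeas : Measurable G := by
    rw [hGdef]
    exact Finset.measurable_sum _ fun j _ =>
      ((continuous_gammaNorm' Γ).measurable.comp (hLmeas j)).pow_const 2
  obtain ⟨I, hIdef⟩ : ∃ I : ℝ, I = ∫ u, Real.exp (-(G u)) ∂μp := ⟨_, rfl⟩
  have hexpint : Integrable (fun u => Real.exp (-(G u))) μp := by
    refine Integrable.mono' (integrable_const 1)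
      ((Real.measurable_exp.comp hGmeas.neg).aestronglyMeasurable) (ae_of_all _ fun u => ?_)
    rw [Real.norm_eq_abs, abs_of_pos (Real.exp_pos _)]
    calc Real.exp (-(G u)) ≤ Real.exp 0 := Real.exp_le_exp.mpr (by linarith [hGnn u])
      _ = 1 := Real.exp_zero
  have hIpos : 0 < I := by
    rw [hIdef, integral_pos_iff_support_of_nonneg_ae
      (ae_of_all _ fun u => (Real.exp_pos _).le) hexpint]
    have hs : Function.support (fun u : X => Real.exp (-(G u))) = Set.univ := by
      ext u; simp [Function.support, (Real.exp_pos (-(G u))).ne']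
    rw [hs]
    simp
  obtain ⟨zR, hzRdef⟩ : ∃ z : ℝ, z = c₀ ^ N * (Real.exp (-(R ^ 2)) * I) := ⟨_, rfl⟩
  have hzRpos : 0 < zR := by
    rw [hzRdef]; exact mul_pos (pow_pos hc0pos _) (mul_pos (Real.exp_pos _) hIpos)
  obtain ⟨m₁, hm1def⟩ : ∃ m : ℝ, m = ∫ u, ‖u‖ ∂μp := ⟨_, rfl⟩
  have hm1nn : 0 ≤ m₁ := by rw [hm1def]; exact integral_nonneg fun u => norm_nonneg _
  obtain ⟨K₁, hK1def⟩ : ∃ K : ℝ, K = P ^ N * (N * Lρ) := ⟨_, rfl⟩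
  have hK1pos : 0 < K₁ := by
    rw [hK1def]; exact mul_pos (pow_pos hP0 _) (mul_pos (by exact_mod_cast hN) hLρ)
  obtain ⟨K₂, hK2def⟩ : ∃ K : ℝ, K = K₁ / zR + P ^ N * K₁ / (zR * zR) := ⟨_, rfl⟩
  have hK2pos : 0 < K₂ := by
    rw [hK2def]
    exact add_pos (div_pos hK1pos hzRpos)
      (div_pos (mul_pos (pow_pos hP0 _) hK1pos) (mul_pos hzRpos hzRpos))
  have hCpos : 0 < B * K₂ * m₁ + 1 := by
    nlinarith [mul_nonneg (mul_nonneg hB.le hK2pos.le) hm1nn]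
  refine ⟨B * K₂ * m₁ + 1, hCpos, ?_⟩
  intro y y' hy hy'
  -- basic facts about the unnormalized densities
  have hρSmeas : ∀ (w : Fin N → Fin d → ℝ) (j : Fin N), Measurable fun u => ρ (w j - L j u) :=
    fun w j => hρmeas.comp (measurable_const.sub (hLmeas j))
  have hDmeas : ∀ (w : Fin N → Fin d → ℝ) (k : ℕ), Measurable fun u => postDensity ρ L w k u :=
    fun w k => Finset.measurable_prod _ fun j _ => hρSmeas w j
  have hDpos : ∀ (w : Fin N → Fin d → ℝ) (k : ℕ) u, 0 < postDensity ρ L w k u :=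
    fun w k u => Finset.prod_pos fun j _ => hpos _
  have hcard : ∀ k : ℕ, (Finset.univ.filter (fun j : Fin N => (j : ℕ) < k)).card ≤ N := fun k =>
    le_trans (Finset.card_filter_le _ _) (by simp)
  have hDle : ∀ (w : Fin N → Fin d → ℝ) (k : ℕ) u, postDensity ρ L w k u ≤ P ^ N := by
    intro w k u
    calc postDensity ρ L w k u
        ≤ ∏ _j ∈ Finset.univ.filter (fun j : Fin N => (j:ℕ) < k), P :=
          Finset.prod_le_prod (fun j _ => (hpos _).le) (fun j _ => hρle _)
      _ = P ^ (Finset.univ.filter (fun j : Fin N => (j:ℕ) < k)).card := Finset.prod_const _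
      _ ≤ P ^ N := pow_le_pow_right₀ hP1 (hcard k)
  have hDint : ∀ (w : Fin N → Fin d → ℝ) (k : ℕ),
      Integrable (fun u => postDensity ρ L w k u) μp := by
    intro w k
    refine Integrable.mono' (integrable_const (P ^ N)) (hDmeas w k).aestronglyMeasurable
      (ae_of_all _ fun u => ?_)
    rw [Real.norm_eq_abs, abs_of_pos (hDpos w k u)]
    exact hDle w k u
  -- lower bound on the density
  have hDlow : ∀ (w : Fin N → Fin d → ℝ), gammaNormTuple Γ w ≤ R → ∀ (k : ℕ) u,
      (c₀ ^ N * Real.exp (-(R ^ 2))) * Real.exp (-(G u)) ≤ postDensity ρ L w k u := by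
    intro w hw k u
    have step1 : ∀ j ∈ Finset.univ.filter (fun j : Fin N => (j:ℕ) < k),
        c₀ * Real.exp (-(gammaNorm Γ (w j) ^ 2 + gammaNorm Γ (L j u) ^ 2))
          ≤ ρ (w j - L j u) := by
      intro j _
      refine le_trans ?_ (htail (w j - L j u))
      have h2 : Real.exp (-(gammaNorm Γ (w j) ^ 2 + gammaNorm Γ (L j u) ^ 2))
          ≤ Real.exp (-(1/2) * gammaNorm Γ (w j - L j u) ^ 2) :=
        Real.exp_le_exp.mpr (by nlinarith [hpar (w j) (L j u)])
      exact mul_le_mul hc0leCt h2 (Real.exp_pos _).le (inv_pos.mpr hCt).le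
    have step2 : ∏ j ∈ Finset.univ.filter (fun j : Fin N => (j:ℕ) < k),
        (c₀ * Real.exp (-(gammaNorm Γ (w j) ^ 2 + gammaNorm Γ (L j u) ^ 2)))
          ≤ postDensity ρ L w k u :=
      Finset.prod_le_prod (fun j _ => mul_nonneg hc0pos.le (Real.exp_pos _).le) step1
    refine le_trans ?_ step2
    rw [Finset.prod_mul_distrib, Finset.prod_const, ← Real.exp_sum]
    have hsum : -(R ^ 2 + G u) ≤ ∑ j ∈ Finset.univ.filter (fun j : Fin N => (j:ℕ) < k),
        -(gammaNorm Γ (w j) ^ 2 + gammaNorm Γ (L j u) ^ 2) := by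
      have h1 : ∑ j ∈ Finset.univ.filter (fun j : Fin N => (j:ℕ) < k),
          (gammaNorm Γ (w j) ^ 2 + gammaNorm Γ (L j u) ^ 2)
            ≤ ∑ j, (gammaNorm Γ (w j) ^ 2 + gammaNorm Γ (L j u) ^ 2) :=
        Finset.sum_le_sum_of_subset_of_nonneg (Finset.filter_subset _ _)
          (fun j _ _ => by positivity)
      have h2 : ∑ j, (gammaNorm Γ (w j) ^ 2 + gammaNorm Γ (L j u) ^ 2)
          = (∑ j, gammaNorm Γ (w j) ^ 2) + G u := by
        rw [hGdef]; exact Finset.sum_add_distrib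
      have h3 : ∑ j, gammaNorm Γ (w j) ^ 2 ≤ R ^ 2 := by
        rw [← hgnt_sq w]; exact pow_le_pow_left₀ (hgnt_nn w) hw 2
      rw [Finset.sum_neg_distrib]
      linarith
    have hcc : c₀ ^ N ≤ c₀ ^ (Finset.univ.filter (fun j : Fin N => (j:ℕ) < k)).card :=
      pow_le_pow_of_le_one hc0pos.le hc0le1 (hcard k)
    calc (c₀ ^ N * Real.exp (-(R ^ 2))) * Real.exp (-(G u))
        = c₀ ^ N * Real.exp (-(R ^ 2 + G u)) := by rw [mul_assoc, ← Real.exp_add, ← neg_add]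
      _ ≤ c₀ ^ (Finset.univ.filter (fun j : Fin N => (j:ℕ) < k)).card
            * Real.exp (∑ j ∈ Finset.univ.filter (fun j : Fin N => (j:ℕ) < k),
              -(gammaNorm Γ (w j) ^ 2 + gammaNorm Γ (L j u) ^ 2)) :=
          mul_le_mul hcc (Real.exp_le_exp.mpr hsum) (Real.exp_pos _).le
            (pow_nonneg hc0pos.le _)
  have hZlow : ∀ (w : Fin N → Fin d → ℝ), gammaNormTuple Γ w ≤ R → ∀ k : ℕ,
      zR ≤ postZ μp ρ L w k := by
    intro w hw k
    have hz : zR = ∫ u, (c₀ ^ N * Real.exp (-(R ^ 2))) * Real.exp (-(G u)) ∂μp := by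
      rw [MeasureTheory.integral_const_mul, hzRdef, ← hIdef]; ring
    rw [hz, postZ]
    exact integral_mono (hexpint.const_mul _) (hDint w k) (fun u => hDlow w hw k u)
  -- Lipschitz estimates
  have hDdiff : ∀ (k : ℕ) u,
      |postDensity ρ L y k u - postDensity ρ L y' k u| ≤ K₁ * gammaNormTuple Γ (y - y') := by
    intro k u
    have h0 := abs_prod_sub_prod_le' (Finset.univ.filter (fun j : Fin N => (j:ℕ) < k))
      (fun j => ρ (y j - L j u)) (fun j => ρ (y' j - L j u)) hP1
      (fun j => (hpos _).le) (fun j => hρle _) (fun j => (hpos _).le) (fun j => hρle _)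
    refine le_trans h0 ?_
    have hterm : ∀ j ∈ Finset.univ.filter (fun j : Fin N => (j:ℕ) < k),
        |ρ (y j - L j u) - ρ (y' j - L j u)| ≤ Lρ * gammaNormTuple Γ (y - y') := by
      intro j _
      have heq : (y j - L j u) - (y' j - L j u) = (y - y') j := by
        simp only [Pi.sub_apply]; abel
      calc |ρ (y j - L j u) - ρ (y' j - L j u)|
          ≤ Lρ * gammaNorm Γ ((y j - L j u) - (y' j - L j u)) := hlip _ _
        _ = Lρ * gammaNorm Γ ((y - y') j) := by rw [heq]
        _ ≤ Lρ * gammaNormTuple Γ (y - y') :=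
            mul_le_mul_of_nonneg_left (hgn_le_gnt _ j) hLρ.le
    have hsum : ∑ j ∈ Finset.univ.filter (fun j : Fin N => (j:ℕ) < k),
        |ρ (y j - L j u) - ρ (y' j - L j u)| ≤ N * (Lρ * gammaNormTuple Γ (y - y')) := by
      calc ∑ j ∈ Finset.univ.filter (fun j : Fin N => (j:ℕ) < k),
            |ρ (y j - L j u) - ρ (y' j - L j u)|
          ≤ ∑ _j ∈ Finset.univ.filter (fun j : Fin N => (j:ℕ) < k),
              Lρ * gammaNormTuple Γ (y - y') := Finset.sum_le_sum hterm
        _ = (Finset.univ.filter (fun j : Fin N => (j:ℕ) < k)).card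
              * (Lρ * gammaNormTuple Γ (y - y')) := by rw [Finset.sum_const, nsmul_eq_mul]
        _ ≤ N * (Lρ * gammaNormTuple Γ (y - y')) :=
            mul_le_mul_of_nonneg_right (by exact_mod_cast hcard k)
              (mul_nonneg hLρ.le (hgnt_nn _))
    calc P ^ (Finset.univ.filter (fun j : Fin N => (j:ℕ) < k)).card
          * ∑ j ∈ Finset.univ.filter (fun j : Fin N => (j:ℕ) < k),
              |ρ (y j - L j u) - ρ (y' j - L j u)|
        ≤ P ^ N * (N * (Lρ * gammaNormTuple Γ (y - y'))) :=
          mul_le_mul (pow_le_pow_right₀ hP1 (hcard k)) hsum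
            (Finset.sum_nonneg fun j _ => abs_nonneg _) (pow_nonneg hP0.le _)
      _ = K₁ * gammaNormTuple Γ (y - y') := by rw [hK1def]; ring
  have hZdiff : ∀ k : ℕ,
      |postZ μp ρ L y k - postZ μp ρ L y' k| ≤ K₁ * gammaNormTuple Γ (y - y') := by
    intro k
    have heq : postZ μp ρ L y k - postZ μp ρ L y' k
        = ∫ u, (postDensity ρ L y k u - postDensity ρ L y' k u) ∂μp :=
      (integral_sub (hDint y k) (hDint y' k)).symm
    rw [← Real.norm_eq_abs, heq]
    calc ‖∫ u, (postDensity ρ L y k u - postDensity ρ L y' k u) ∂μp‖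
        ≤ (K₁ * gammaNormTuple Γ (y - y')) * (μp Set.univ).toReal :=
          norm_integral_le_of_norm_le_const
            (ae_of_all _ fun u => by rw [Real.norm_eq_abs]; exact hDdiff k u)
      _ = K₁ * gammaNormTuple Γ (y - y') := by simp
  have hhdiff : ∀ (k : ℕ) u,
      |postDensity ρ L y k u / postZ μp ρ L y k - postDensity ρ L y' k u / postZ μp ρ L y' k|
        ≤ K₂ * gammaNormTuple Γ (y - y') := by
    intro k u
    have hZy : zR ≤ postZ μp ρ L y k := hZlow y hy k
    have hZy' : zR ≤ postZ μp ρ L y' k := hZlow y' hy' k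
    have hZyp : 0 < postZ μp ρ L y k := lt_of_lt_of_le hzRpos hZy
    have hZy'p : 0 < postZ μp ρ L y' k := lt_of_lt_of_le hzRpos hZy'
    have hgnn : 0 ≤ gammaNormTuple Γ (y - y') := hgnt_nn _
    have hsplit : postDensity ρ L y k u / postZ μp ρ L y k
          - postDensity ρ L y' k u / postZ μp ρ L y' k
        = (postDensity ρ L y k u - postDensity ρ L y' k u) / postZ μp ρ L y k
          + postDensity ρ L y' k u * (postZ μp ρ L y' k - postZ μp ρ L y k)
              / (postZ μp ρ L y k * postZ μp ρ L y' k) := by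
      field_simp
      ring
    rw [hsplit]
    have t1 : |(postDensity ρ L y k u - postDensity ρ L y' k u) / postZ μp ρ L y k|
        ≤ K₁ * gammaNormTuple Γ (y - y') / zR := by
      rw [abs_div, abs_of_pos hZyp]
      exact div_le_div₀ (mul_nonneg hK1pos.le hgnn) (hDdiff k u) hzRpos hZy
    have t2 : |postDensity ρ L y' k u * (postZ μp ρ L y' k - postZ μp ρ L y k)
          / (postZ μp ρ L y k * postZ μp ρ L y' k)|
        ≤ P ^ N * (K₁ * gammaNormTuple Γ (y - y')) / (zR * zR) := by
      rw [abs_div, abs_mul, abs_of_pos (hDpos y' k u), abs_of_pos (mul_pos hZyp hZy'p)]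
      refine div_le_div₀ (mul_nonneg (pow_nonneg hP0.le _) (mul_nonneg hK1pos.le hgnn)) ?_
        (mul_pos hzRpos hzRpos) (mul_le_mul hZy hZy' hzRpos.le hZyp.le)
      exact mul_le_mul (hDle y' k u) (by rw [abs_sub_comm]; exact hZdiff k)
        (abs_nonneg _) (pow_nonneg hP0.le _)
    calc |(postDensity ρ L y k u - postDensity ρ L y' k u) / postZ μp ρ L y k
          + postDensity ρ L y' k u * (postZ μp ρ L y' k - postZ μp ρ L y k)
              / (postZ μp ρ L y k * postZ μp ρ L y' k)|
        ≤ |(postDensity ρ L y k u - postDensity ρ L y' k u) / postZ μp ρ L y k|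
          + |postDensity ρ L y' k u * (postZ μp ρ L y' k - postZ μp ρ L y k)
              / (postZ μp ρ L y k * postZ μp ρ L y' k)| := abs_add_le _ _
      _ ≤ K₁ * gammaNormTuple Γ (y - y') / zR
          + P ^ N * (K₁ * gammaNormTuple Γ (y - y')) / (zR * zR) := add_le_add t1 t2
      _ = K₂ * gammaNormTuple Γ (y - y') := by rw [hK2def]; ring
  -- integral representation
  have hSt : ∀ t : ℝ, Measurable (S t) := fun t => hSmeas.comp measurable_prodMk_left
  have hPhiBd : ∀ (Φ : X → ℝ), LipschitzWith 1 Φ → Φ 0 = 0 → ∀ x, |Φ x| ≤ ‖x‖ := by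
    intro Φ hΦ hΦ0 x
    have h := hΦ.dist_le_mul x 0
    simpa [hΦ0, Real.dist_eq, dist_zero_right] using h
  have hIF : ∀ (w : Fin N → Fin d → ℝ), gammaNormTuple Γ w ≤ R → ∀ (t : ℝ) (Φ : X → ℝ),
      LipschitzWith 1 Φ →
      ∫ x, Φ x ∂(filteringDist μp ρ ts S L w t)
        = ∫ u, (postDensity ρ L w (numObs ts t) u / postZ μp ρ L w (numObs ts t))
            * Φ (S t u) ∂μp := by
    intro w hw t Φ hΦ
    have hZp : 0 < postZ μp ρ L w (numObs ts t) := lt_of_lt_of_le hzRpos (hZlow w hw _)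
    have hnn : ∀ u, 0 ≤ postDensity ρ L w (numObs ts t) u / postZ μp ρ L w (numObs ts t) :=
      fun u => div_nonneg (hDpos w _ u).le hZp.le
    have hmeas : Measurable fun u =>
        postDensity ρ L w (numObs ts t) u / postZ μp ρ L w (numObs ts t) :=
      (hDmeas w _).div_const _
    rw [filteringDist, integral_map (hSt t).aemeasurable hΦ.continuous.aestronglyMeasurable,
      posteriorK]
    rw [show (fun u => ENNReal.ofReal
          (postDensity ρ L w (numObs ts t) u / postZ μp ρ L w (numObs ts t)))
        = (fun u => ((Real.toNNReal (postDensity ρ L w (numObs ts t) u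
            / postZ μp ρ L w (numObs ts t)) : NNReal) : ℝ≥0∞)) from rfl]
    rw [integral_withDensity_eq_integral_smul hmeas.real_toNNReal (fun x => Φ (S t x))]
    refine integral_congr_ae (ae_of_all _ fun u => ?_)
    simp [NNReal.smul_def, Real.coe_toNNReal _ (hnn u)]
  have hintg : ∀ (w : Fin N → Fin d → ℝ), gammaNormTuple Γ w ≤ R →
      ∀ t ∈ Set.Icc (0:ℝ) T, ∀ (Φ : X → ℝ), LipschitzWith 1 Φ → Φ 0 = 0 →
      Integrable (fun u =>
        (postDensity ρ L w (numObs ts t) u / postZ μp ρ L w (numObs ts t)) * Φ (S t u)) μp := by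
    intro w hw t ht Φ hΦ hΦ0
    have hZp : 0 < postZ μp ρ L w (numObs ts t) := lt_of_lt_of_le hzRpos (hZlow w hw _)
    refine Integrable.mono' (hmom.const_mul (P ^ N / zR * B))
      (((hDmeas w _).div_const _).mul
        ((hΦ.continuous.measurable).comp (hSt t))).aestronglyMeasurable
      (ae_of_all _ fun u => ?_)
    rw [Real.norm_eq_abs, abs_mul, abs_of_nonneg (div_nonneg (hDpos w _ u).le hZp.le)]
    have h1 : postDensity ρ L w (numObs ts t) u / postZ μp ρ L w (numObs ts t) ≤ P ^ N / zR :=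
      div_le_div₀ (pow_nonneg hP0.le _) (hDle w _ u) hzRpos (hZlow w hw _)
    have h2 : |Φ (S t u)| ≤ B * ‖u‖ :=
      le_trans (hPhiBd Φ hΦ hΦ0 (S t u)) (hSbd t ht u)
    calc (postDensity ρ L w (numObs ts t) u / postZ μp ρ L w (numObs ts t)) * |Φ (S t u)|
        ≤ (P ^ N / zR) * (B * ‖u‖) :=
          mul_le_mul h1 h2 (abs_nonneg _) (div_nonneg (pow_nonneg hP0.le _) hzRpos.le)
      _ = P ^ N / zR * B * ‖u‖ := by ring
  -- the key pointwise-in-time bound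
  have key : ∀ t ∈ Set.Icc (0:ℝ) T,
      W1 (filteringDist μp ρ ts S L y t) (filteringDist μp ρ ts S L y' t)
        ≤ (B * K₂ * m₁ + 1) * gammaNormTuple Γ (y - y') := by
    intro t ht
    have hgnn : 0 ≤ gammaNormTuple Γ (y - y') := hgnt_nn _
    refine Real.sSup_le ?_ (mul_nonneg hCpos.le hgnn)
    rintro r ⟨Φ, hΦ, hΦ0, rfl⟩
    rw [hIF y hy t Φ hΦ, hIF y' hy' t Φ hΦ]
    have hIy := hintg y hy t ht Φ hΦ hΦ0
    have hIy' := hintg y' hy' t ht Φ hΦ hΦ0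
    rw [← integral_sub hIy hIy']
    have hptw : ∀ u, (postDensity ρ L y (numObs ts t) u / postZ μp ρ L y (numObs ts t))
          * Φ (S t u)
        - (postDensity ρ L y' (numObs ts t) u / postZ μp ρ L y' (numObs ts t)) * Φ (S t u)
        ≤ (K₂ * gammaNormTuple Γ (y - y') * B) * ‖u‖ := by
      intro u
      have h2 : |Φ (S t u)| ≤ B * ‖u‖ :=
        le_trans (hPhiBd Φ hΦ hΦ0 (S t u)) (hSbd t ht u)
      calc (postDensity ρ L y (numObs ts t) u / postZ μp ρ L y (numObs ts t)) * Φ (S t u)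
            - (postDensity ρ L y' (numObs ts t) u / postZ μp ρ L y' (numObs ts t)) * Φ (S t u)
          = (postDensity ρ L y (numObs ts t) u / postZ μp ρ L y (numObs ts t)
              - postDensity ρ L y' (numObs ts t) u / postZ μp ρ L y' (numObs ts t))
              * Φ (S t u) := by ring
        _ ≤ |(postDensity ρ L y (numObs ts t) u / postZ μp ρ L y (numObs ts t)
              - postDensity ρ L y' (numObs ts t) u / postZ μp ρ L y' (numObs ts t))
              * Φ (S t u)| := le_abs_self _
        _ = |postDensity ρ L y (numObs ts t) u / postZ μp ρ L y (numObs ts t)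
              - postDensity ρ L y' (numObs ts t) u / postZ μp ρ L y' (numObs ts t)|
              * |Φ (S t u)| := abs_mul _ _
        _ ≤ (K₂ * gammaNormTuple Γ (y - y')) * (B * ‖u‖) :=
            mul_le_mul (hhdiff (numObs ts t) u) h2 (abs_nonneg _)
              (mul_nonneg hK2pos.le hgnn)
        _ = (K₂ * gammaNormTuple Γ (y - y') * B) * ‖u‖ := by ring
    calc (∫ u, ((postDensity ρ L y (numObs ts t) u / postZ μp ρ L y (numObs ts t))
            * Φ (S t u)
          - (postDensity ρ L y' (numObs ts t) u / postZ μp ρ L y' (numObs ts t))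
            * Φ (S t u)) ∂μp)
        ≤ ∫ u, (K₂ * gammaNormTuple Γ (y - y') * B) * ‖u‖ ∂μp :=
          integral_mono (hIy.sub hIy') (hmom.const_mul _) hptw
      _ = (K₂ * gammaNormTuple Γ (y - y') * B) * m₁ := by
          rw [MeasureTheory.integral_const_mul, ← hm1def]
      _ = (B * K₂ * m₁) * gammaNormTuple Γ (y - y') := by ring
      _ ≤ (B * K₂ * m₁ + 1) * gammaNormTuple Γ (y - y') :=
          mul_le_mul_of_nonneg_right (by linarith) hgnn
  refine ⟨key, ?_⟩
  by_cases hInt : IntervalIntegrable (fun t =>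
      W1 (filteringDist μp ρ ts S L y t) (filteringDist μp ρ ts S L y' t))
      MeasureTheory.volume 0 T
  · calc (∫ t in (0:ℝ)..T,
          W1 (filteringDist μp ρ ts S L y t) (filteringDist μp ρ ts S L y' t))
        ≤ ∫ _t in (0:ℝ)..T, (B * K₂ * m₁ + 1) * gammaNormTuple Γ (y - y') :=
          intervalIntegral.integral_mono_on hT.le hInt intervalIntegrable_const
            (fun t ht => key t ht)
      _ = (B * K₂ * m₁ + 1) * T * gammaNormTuple Γ (y - y') := by
          rw [intervalIntegral.integral_const, smul_eq_mul]; ring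
  · rw [intervalIntegral.integral_undef hInt]
    exact mul_nonneg (mul_nonneg hCpos.le hT.le) (hgnt_nn _)
end
end

section
/- Uniform stability of approximate Bayesian posteriors (stability clause of Theorem 3.9): Let μ_prior be a Borel probability measure on a separable Banach space X with finite first moment m₁ := ∫_X ‖ū‖_X dμ_prior(ū) < ∞. For every R, M > 0 there exists C = C(R, M, ρ, m₁) > 0 such that for every Borel measurable observable L : X → ℝ^d with ‖L‖_{L²(μ_prior)} ≤ M and all y, y' ∈ ℝ^d with |y|_Γ ≤ R and |y'|_Γ ≤ R: W1(μ^y, μ^{y'}) ≤ C |y − y'|_Γ. In particular, for a family of observables L^Δ with sup_Δ ‖L^Δ‖_{L²(μ_prior)} ≤ M, the posteriors μ^{Δ,y} are Lipschitz in the measurement y uniformly in Δ. -/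
open MeasureTheory
open scoped BigOperators ENNReal Matrix

noncomputable section

/-- Normalization constant `Z(y) = ∫ ρ(y − L(ū)) dμ_prior(ū)`. -/
def bayesZ {X : Type*} [MeasurableSpace X] {d : ℕ} (μp : Measure X)
    (ρ : (Fin d → ℝ) → ℝ) (L : X → Fin d → ℝ) (y : Fin d → ℝ) : ℝ :=
  ∫ u, ρ (y - L u) ∂μp

/-- The Bayesian posterior `μ^y = Z(y)⁻¹ ρ(y − L(·)) · μ_prior`. -/
def bayesPosterior {X : Type*} [MeasurableSpace X] {d : ℕ} (μp : Measure X)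
    (ρ : (Fin d → ℝ) → ℝ) (L : X → Fin d → ℝ) (y : Fin d → ℝ) : Measure X :=
  μp.withDensity fun u => ENNReal.ofReal (ρ (y - L u) / bayesZ μp ρ L y)

section GammaNormLemmas

variable {d : ℕ} {Γ : Matrix (Fin d) (Fin d) ℝ}

lemma gammaNorm_eq_norm (hΓ : Γ.PosDef) (v : Fin d → ℝ) :
    gammaNorm Γ v = @norm _ (Matrix.toNormedAddCommGroup _ hΓ.inv).toNorm v := by
  have h := @norm_eq_sqrt_real_inner (Fin d → ℝ)
    (Matrix.toNormedAddCommGroup _ hΓ.inv).toSeminormedAddCommGroup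
    (Matrix.toInnerProductSpace _ hΓ.inv.posSemidef) v
  rw [h]
  congr 1
  exact congrArg Real.sqrt (dotProduct_comm _ _)

lemma gammaNorm_nonneg (v : Fin d → ℝ) : 0 ≤ gammaNorm Γ v := Real.sqrt_nonneg _

lemma gammaNorm_triangle (hΓ : Γ.PosDef) (a b : Fin d → ℝ) :
    gammaNorm Γ (a + b) ≤ gammaNorm Γ a + gammaNorm Γ b := by
  rw [gammaNorm_eq_norm hΓ, gammaNorm_eq_norm hΓ, gammaNorm_eq_norm hΓ]
  exact @norm_add_le _ (@SeminormedAddCommGroup.toSeminormedAddGroup _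
    (Matrix.toNormedAddCommGroup _ hΓ.inv).toSeminormedAddCommGroup) a b

lemma gammaNorm_neg (a : Fin d → ℝ) : gammaNorm Γ (-a) = gammaNorm Γ a := by
  simp [gammaNorm, Matrix.mulVec_neg]

lemma gammaNorm_sub_le (hΓ : Γ.PosDef) (a b : Fin d → ℝ) :
    gammaNorm Γ (a - b) ≤ gammaNorm Γ a + gammaNorm Γ b := by
  rw [sub_eq_add_neg]
  exact (gammaNorm_triangle hΓ a (-b)).trans (by rw [gammaNorm_neg])

lemma gammaNorm_continuous : Continuous (gammaNorm Γ) :=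
  Real.continuous_sqrt.comp
    (continuous_id.dotProduct (continuous_const.matrix_mulVec continuous_id))

lemma gammaNorm_zero : gammaNorm Γ (0 : Fin d → ℝ) = 0 := by
  simp [gammaNorm]

end GammaNormLemmas

set_option maxHeartbeats 2000000 in
/-- **Theorem 3.9, stability clause: uniform Lipschitz stability of Bayesian
posteriors in the measurement, with constant depending only on `R`, `M`, `ρ`
and the first moment of the prior (in particular uniform in the observable,
hence in the discretization parameter Δ).** -/
theorem bip_uniform_stability
    {X : Type*} [NormedAddCommGroup X] [NormedSpace ℝ X] [CompleteSpace X]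
    [TopologicalSpace.SeparableSpace X] [MeasurableSpace X] [BorelSpace X]
    {d : ℕ}
    (Γ : Matrix (Fin d) (Fin d) ℝ) (hΓ : Γ.PosDef)
    (ρ : (Fin d → ℝ) → ℝ) (Lρ Cb Ct : ℝ) (hρ : IsNoiseDensity Γ ρ Lρ Cb Ct)
    (μp : Measure X) [IsProbabilityMeasure μp]
    (hmom : Integrable (fun u => ‖u‖) μp) :
    ∀ R > 0, ∀ M > 0, ∃ C > 0,
      ∀ L : X → Fin d → ℝ, Measurable L →
        Integrable (fun u => (gammaNorm Γ (L u)) ^ 2) μp →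
        Real.sqrt (∫ u, (gammaNorm Γ (L u)) ^ 2 ∂μp) ≤ M →
      ∀ y y' : Fin d → ℝ, gammaNorm Γ y ≤ R → gammaNorm Γ y' ≤ R →
        W1 (bayesPosterior μp ρ L y) (bayesPosterior μp ρ L y')
          ≤ C * gammaNorm Γ (y - y') := by
  intro R hR M hM
  -- continuity of ρ
  have hρcont : Continuous ρ := by
    rw [continuous_iff_continuousAt]
    intro x
    have hb : Filter.Tendsto (fun w => Lρ * gammaNorm Γ (w - x)) (nhds x)
        (nhds (Lρ * gammaNorm Γ (x - x))) :=
      (continuous_const.mul (gammaNorm_continuous.comp (continuous_id.sub continuous_const))).tendsto x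
    rw [show x - x = 0 by abel, gammaNorm_zero, mul_zero] at hb
    have hsq : Filter.Tendsto (fun w => |ρ w - ρ x|) (nhds x) (nhds 0) :=
      squeeze_zero (fun t => abs_nonneg _) (fun t => hρ.lip t x) hb
    have : Filter.Tendsto (fun w => dist (ρ w) (ρ x)) (nhds x) (nhds 0) := by
      simpa [Real.dist_eq] using hsq
    exact tendsto_iff_dist_tendsto_zero.2 this
  -- constants
  obtain ⟨z, hzdef⟩ : ∃ t : ℝ, t = Ct⁻¹ * Real.exp (-(R ^ 2 + 2 * M ^ 2)) / 2 := ⟨_, rfl⟩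
  have hz : 0 < z := by
    rw [hzdef]
    have h1 := Real.exp_pos (-(R ^ 2 + 2 * M ^ 2))
    have h2 := inv_pos.2 hρ.Ct_pos
    positivity
  obtain ⟨K, hKdef⟩ : ∃ t : ℝ, t = Lρ / z + Cb * Lρ / (z * z) := ⟨_, rfl⟩
  have hK : 0 < K := by
    have h1 : 0 < Lρ / z := div_pos hρ.Lρ_pos hz
    have h2 : 0 < Cb * Lρ / (z * z) := div_pos (mul_pos hρ.Cb_pos hρ.Lρ_pos) (mul_pos hz hz)
    rw [hKdef]; linarith
  have hm1 : 0 ≤ ∫ u, ‖u‖ ∂μp := integral_nonneg fun u => norm_nonneg u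
  refine ⟨K * ((∫ u, ‖u‖ ∂μp) + 1), mul_pos hK (by linarith), ?_⟩
  intro L hL hL2 hLM y y' hy hy'
  set D : ℝ := gammaNorm Γ (y - y') with hDdef
  have hD : 0 ≤ D := gammaNorm_nonneg _
  -- measurability and integrability of densities
  have hgm : ∀ w : Fin d → ℝ, Measurable fun u => ρ (w - L u) :=
    fun w => hρcont.measurable.comp (measurable_const.sub hL)
  have hgint : ∀ w : Fin d → ℝ, Integrable (fun u => ρ (w - L u)) μp := by
    intro w
    refine (integrable_const Cb).mono' (hgm w).aestronglyMeasurable (ae_of_all _ fun u => ?_)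
    rw [Real.norm_eq_abs, abs_of_pos (hρ.pos _)]
    exact hρ.bdd _
  -- lower bound on Z
  have hZlow : ∀ w : Fin d → ℝ, gammaNorm Γ w ≤ R → z ≤ bayesZ μp ρ L w := by
    intro w hw
    have hg2m : Measurable fun u => (gammaNorm Γ (L u)) ^ 2 :=
      ((gammaNorm_continuous.measurable).comp hL).pow_const 2
    have hA : MeasurableSet {u : X | (gammaNorm Γ (L u)) ^ 2 < 2 * M ^ 2} :=
      measurableSet_lt hg2m measurable_const
    -- Chebyshev
    have hint : ∫ u, (gammaNorm Γ (L u)) ^ 2 ∂μp ≤ M ^ 2 := by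
      have h0 : 0 ≤ ∫ u, (gammaNorm Γ (L u)) ^ 2 ∂μp := integral_nonneg fun u => sq_nonneg _
      have := Real.sq_sqrt h0
      nlinarith [Real.sqrt_nonneg (∫ u, (gammaNorm Γ (L u)) ^ 2 ∂μp)]
    have hcheb := mul_meas_ge_le_integral_of_nonneg
      (ae_of_all μp fun u => sq_nonneg (gammaNorm Γ (L u))) hL2 (2 * M ^ 2)
    have hAc : (μp {u : X | (gammaNorm Γ (L u)) ^ 2 < 2 * M ^ 2}ᶜ).toReal ≤ 1 / 2 := by
      have hAceq : {u : X | (gammaNorm Γ (L u)) ^ 2 < 2 * M ^ 2}ᶜ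
          = {u : X | 2 * M ^ 2 ≤ (gammaNorm Γ (L u)) ^ 2} := by
        ext u; simp [not_lt]
      rw [hAceq]
      rw [measureReal_def] at hcheb
      nlinarith [hcheb, hint, mul_pos hM hM,
        ENNReal.toReal_nonneg (a := μp {u : X | 2 * M ^ 2 ≤ (gammaNorm Γ (L u)) ^ 2})]
    set A : Set X := {u : X | (gammaNorm Γ (L u)) ^ 2 < 2 * M ^ 2} with hAdef
    have hsum : (μp A).toReal + (μp Aᶜ).toReal = 1 := by
      rw [← ENNReal.toReal_add (measure_ne_top _ _) (measure_ne_top _ _),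
        measure_add_measure_compl hA]
      simp
    have hAhalf : 1 / 2 ≤ (μp A).toReal := by linarith
    -- pointwise lower bound on A
    have hpt : ∀ u ∈ A, 2 * z ≤ ρ (w - L u) := by
      intro u hu
      refine le_trans ?_ (hρ.tail (w - L u))
      have h2z : 2 * z = Ct⁻¹ * Real.exp (-(R ^ 2 + 2 * M ^ 2)) := by
        rw [hzdef]; ring
      rw [h2z]
      refine mul_le_mul_of_nonneg_left ?_ (inv_pos.2 hρ.Ct_pos).le
      apply Real.exp_le_exp.2
      have htri : gammaNorm Γ (w - L u) ≤ gammaNorm Γ w + gammaNorm Γ (L u) :=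
        gammaNorm_sub_le hΓ w (L u)
      have h1 : gammaNorm Γ (L u) ^ 2 < 2 * M ^ 2 := hu
      have h2 : 0 ≤ gammaNorm Γ (L u) := gammaNorm_nonneg _
      have h3 : 0 ≤ gammaNorm Γ (w - L u) := gammaNorm_nonneg _
      have h4 : 0 ≤ gammaNorm Γ w := gammaNorm_nonneg _
      nlinarith [pow_le_pow_left₀ h3 htri 2, pow_le_pow_left₀ h4 hw 2,
        sq_nonneg (gammaNorm Γ w - gammaNorm Γ (L u))]
    have hconst : (2 * z) * (μp A).toReal ≤ bayesZ μp ρ L w := by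
      have h1 : ∫ _ in A, (2 * z) ∂μp ≤ ∫ u in A, ρ (w - L u) ∂μp := by
        refine setIntegral_mono_on (integrableOn_const (measure_ne_top _ _))
          ((hgint w).integrableOn) hA hpt
      have h2 : ∫ u in A, ρ (w - L u) ∂μp ≤ ∫ u, ρ (w - L u) ∂μp :=
        setIntegral_le_integral (hgint w) (ae_of_all _ fun u => (hρ.pos _).le)
      have h3 : ∫ _ in A, (2 * z) ∂μp = (μp A).toReal * (2 * z) := by
        rw [setIntegral_const]; simp [mul_comm, measureReal_def]
      rw [bayesZ]
      calc (2 * z) * (μp A).toReal = ∫ _ in A, (2 * z) ∂μp := by rw [h3]; ring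
        _ ≤ _ := h1.trans h2
    calc z = (2 * z) * (1 / 2) := by ring
      _ ≤ (2 * z) * (μp A).toReal := by
          exact mul_le_mul_of_nonneg_left hAhalf (by linarith)
      _ ≤ bayesZ μp ρ L w := hconst
  have hZy := hZlow y hy
  have hZy' := hZlow y' hy'
  have hZyp : 0 < bayesZ μp ρ L y := lt_of_lt_of_le hz hZy
  have hZy'p : 0 < bayesZ μp ρ L y' := lt_of_lt_of_le hz hZy'
  -- Lipschitz estimate for Z
  have hZlip : |bayesZ μp ρ L y - bayesZ μp ρ L y'| ≤ Lρ * D := by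
    rw [bayesZ, bayesZ, ← integral_sub (hgint y) (hgint y')]
    have h1 : |∫ u, (ρ (y - L u) - ρ (y' - L u)) ∂μp|
        ≤ ∫ u, |ρ (y - L u) - ρ (y' - L u)| ∂μp := by
      simpa [Real.norm_eq_abs] using
        norm_integral_le_integral_norm (fun u => ρ (y - L u) - ρ (y' - L u)) (μ := μp)
    refine h1.trans ?_
    have h2 : ∀ u : X, |ρ (y - L u) - ρ (y' - L u)| ≤ Lρ * D := by
      intro u
      have := hρ.lip (y - L u) (y' - L u)
      rwa [sub_sub_sub_cancel_right] at this
    calc ∫ u, |ρ (y - L u) - ρ (y' - L u)| ∂μp ≤ ∫ _, Lρ * D ∂μp := by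
          refine integral_mono ((hgint y).sub (hgint y')).abs (integrable_const _) h2
      _ = Lρ * D := by simp
  -- pointwise density difference bound
  have hdens : ∀ u : X,
      |ρ (y - L u) / bayesZ μp ρ L y - ρ (y' - L u) / bayesZ μp ρ L y'| ≤ K * D := by
    intro u
    set Z1 := bayesZ μp ρ L y
    set Z2 := bayesZ μp ρ L y'
    set a := ρ (y - L u)
    set b := ρ (y' - L u)
    have hab : |a - b| ≤ Lρ * D := by
      have := hρ.lip (y - L u) (y' - L u)
      rwa [sub_sub_sub_cancel_right] at this
    have he : a / Z1 - b / Z2 = (a - b) / Z1 + b * (Z2 - Z1) / (Z1 * Z2) := by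
      field_simp
      ring
    rw [he]
    refine (abs_add_le _ _).trans ?_
    have hLD : 0 ≤ Lρ * D := mul_nonneg hρ.Lρ_pos.le hD
    have h1 : |(a - b) / Z1| ≤ (Lρ * D) / z := by
      rw [abs_div, abs_of_pos hZyp]
      exact div_le_div₀ hLD hab hz hZy
    have h2 : |b * (Z2 - Z1) / (Z1 * Z2)| ≤ (Cb * (Lρ * D)) / (z * z) := by
      rw [abs_div, abs_of_pos (mul_pos hZyp hZy'p), abs_mul]
      refine div_le_div₀ (mul_nonneg hρ.Cb_pos.le hLD) ?_ (by positivity) ?_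
      · refine mul_le_mul ?_ ?_ (abs_nonneg _) hρ.Cb_pos.le
        · rw [abs_of_pos (hρ.pos _)]; exact hρ.bdd _
        · rw [abs_sub_comm]; exact hZlip
      · exact mul_le_mul hZy hZy' hz.le hZyp.le
    have : (Lρ * D) / z + (Cb * (Lρ * D)) / (z * z) = K * D := by
      rw [hKdef]; field_simp
    linarith
  -- posterior integrals
  have hpost : ∀ (w : Fin d → ℝ) (Φ : X → ℝ),
      (∫ u, Φ u ∂(bayesPosterior μp ρ L w))
        = ∫ u, (ρ (w - L u) / bayesZ μp ρ L w) * Φ u ∂μp := by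
    intro w Φ
    have hmeas : Measurable fun u => Real.toNNReal (ρ (w - L u) / bayesZ μp ρ L w) :=
      ((hgm w).div_const _).real_toNNReal
    rw [show bayesPosterior μp ρ L w = μp.withDensity
        (fun u => ((fun u => Real.toNNReal (ρ (w - L u) / bayesZ μp ρ L w)) u : ℝ≥0∞)) from rfl,
      integral_withDensity_eq_integral_smul hmeas Φ]
    refine integral_congr_ae (ae_of_all _ fun u => ?_)
    have hZnn : 0 ≤ bayesZ μp ρ L w := integral_nonneg fun v => (hρ.pos _).le
    have hnn : 0 ≤ ρ (w - L u) / bayesZ μp ρ L w := div_nonneg (hρ.pos _).le hZnn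
    simp [NNReal.smul_def, Real.coe_toNNReal _ hnn]
  -- final estimate
  rw [W1]
  refine Real.sSup_le ?_ (by positivity)
  rintro r ⟨Φ, hΦlip, hΦ0, rfl⟩
  rw [hpost y Φ, hpost y' Φ]
  have hΦbd : ∀ u : X, |Φ u| ≤ ‖u‖ := by
    intro u
    have := hΦlip.dist_le_mul u 0
    simpa [hΦ0, Real.dist_eq, dist_eq_norm] using this
  have hΦmeas : Measurable Φ := hΦlip.continuous.measurable
  have hI : ∀ w : Fin d → ℝ, z ≤ bayesZ μp ρ L w →
      Integrable (fun u => (ρ (w - L u) / bayesZ μp ρ L w) * Φ u) μp := by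
    intro w hwz
    refine (hmom.const_mul (Cb / z)).mono'
      (((hgm w).div_const _).mul hΦmeas).aestronglyMeasurable (ae_of_all _ fun u => ?_)
    rw [Real.norm_eq_abs, abs_mul]
    have h1 : |ρ (w - L u) / bayesZ μp ρ L w| ≤ Cb / z := by
      rw [abs_of_pos (div_pos (hρ.pos _) (lt_of_lt_of_le hz hwz))]
      exact div_le_div₀ hρ.Cb_pos.le (hρ.bdd _) hz hwz
    exact mul_le_mul h1 (hΦbd u) (abs_nonneg _) (div_nonneg hρ.Cb_pos.le hz.le)
  rw [← integral_sub (hI y hZy) (hI y' hZy')]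
  have hpt : ∀ u : X,
      (ρ (y - L u) / bayesZ μp ρ L y) * Φ u - (ρ (y' - L u) / bayesZ μp ρ L y') * Φ u
        ≤ (K * D) * ‖u‖ := by
    intro u
    rw [← sub_mul]
    calc (ρ (y - L u) / bayesZ μp ρ L y - ρ (y' - L u) / bayesZ μp ρ L y') * Φ u
        ≤ |(ρ (y - L u) / bayesZ μp ρ L y - ρ (y' - L u) / bayesZ μp ρ L y') * Φ u| :=
          le_abs_self _
      _ = |ρ (y - L u) / bayesZ μp ρ L y - ρ (y' - L u) / bayesZ μp ρ L y'| * |Φ u| :=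
          abs_mul _ _
      _ ≤ (K * D) * ‖u‖ :=
          mul_le_mul (hdens u) (hΦbd u) (abs_nonneg _) (mul_nonneg hK.le hD)
  calc (∫ u, ((ρ (y - L u) / bayesZ μp ρ L y) * Φ u
          - (ρ (y' - L u) / bayesZ μp ρ L y') * Φ u) ∂μp)
      ≤ ∫ u, (K * D) * ‖u‖ ∂μp :=
        integral_mono ((hI y hZy).sub (hI y' hZy')) (hmom.const_mul (K * D)) hpt
    _ = (K * D) * ∫ u, ‖u‖ ∂μp := integral_const_mul _ _
    _ ≤ K * ((∫ u, ‖u‖ ∂μp) + 1) * D := by nlinarith [mul_nonneg hK.le hD]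
end
end

section
/- Recursive filtering equals push-forward of the Bayesian posterior (Proposition 3.3): Let X be a separable Banach space and S : [0,∞) × X → X Borel measurable with the semigroup property S_s(S_t(ū)) = S_{s+t}(ū) for all s, t ≥ 0 and ū ∈ X. Let μ_prior be a Borel probability measure on X, let 0 = t_0 < t_1 < ⋯ < t_N, and let Φ̃_1, …, Φ̃_N : X → ℝ be Borel measurable functions, each bounded below. Set Φ_j(ū) := Φ̃_j(S_{t_{j−1}}(ū)) and define the Bayesian posteriors μ^{(0)} := μ_prior and μ^{(j)} := Z_j⁻¹ exp(−Σ_{k=1}^{j} Φ_k) · μ_prior, where Z_j := ∫_X exp(−Σ_{k=1}^{j} Φ_k(ū)) dμ_prior(ū) (which is finite and strictly positive). Define recursively ν̃_0 := (S_0)_# μ_prior and, for j = 1, …, N, the correction step ν̃'_j := z_j⁻¹ exp(−Φ̃_j) · ν̃_{j−1} with z_j := ∫_X exp(−Φ̃_j) dν̃_{j−1}, followed by the prediction step ν̃_j := (S_{t_j − t_{j−1}})_# ν̃'_j. Then ν̃_j = (S_{t_j})_# μ^{(j)} for every j = 0, 1, …, N. -/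
open MeasureTheory
open scoped BigOperators ENNReal

noncomputable section

/-- The accumulated log-likelihood `Σ_{k=1}^{j} Φ_k(ū)` with
`Φ_k(ū) = Φ̃_k(S_{t_{k−1}}(ū))`. -/
def recPhiSum {X : Type*} (S : ℝ → X → X) (t : ℕ → ℝ) (Φt : ℕ → X → ℝ)
    (j : ℕ) (u : X) : ℝ :=
  ∑ k ∈ Finset.range j, Φt (k + 1) (S (t k) u)

/-- The normalization constant `Z_j`. -/
def recZ {X : Type*} [MeasurableSpace X] (μp : Measure X) (S : ℝ → X → X)
    (t : ℕ → ℝ) (Φt : ℕ → X → ℝ) (j : ℕ) : ℝ :=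
  ∫ u, Real.exp (-recPhiSum S t Φt j u) ∂μp

/-- The Bayesian posterior `μ^{(j)} = Z_j⁻¹ exp(−Σ_{k=1}^{j} Φ_k) · μ_prior`. -/
def recPosterior {X : Type*} [MeasurableSpace X] (μp : Measure X) (S : ℝ → X → X)
    (t : ℕ → ℝ) (Φt : ℕ → X → ℝ) (j : ℕ) : Measure X :=
  μp.withDensity fun u =>
    ENNReal.ofReal (Real.exp (-recPhiSum S t Φt j u) / recZ μp S t Φt j)

/-- The recursively defined filtering measures: `ν̃_0 = (S_0)_# μ_prior`, and
`ν̃_{j+1}` is obtained by the correction step (reweighting by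
`z⁻¹ exp(−Φ̃_{j+1})`) followed by the prediction step (push-forward by
`S_{t_{j+1} − t_j}`). -/
def recFilter {X : Type*} [MeasurableSpace X] (μp : Measure X) (S : ℝ → X → X)
    (t : ℕ → ℝ) (Φt : ℕ → X → ℝ) : ℕ → Measure X
  | 0 => μp.map (S 0)
  | j + 1 =>
    ((recFilter μp S t Φt j).withDensity fun u =>
        ENNReal.ofReal (Real.exp (-Φt (j + 1) u) /
          ∫ v, Real.exp (-Φt (j + 1) v) ∂(recFilter μp S t Φt j))).map
      (S (t (j + 1) - t j))

open scoped NNReal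

private lemma withDensity_map_comm {X : Type*} [MeasurableSpace X] (μ : Measure X)
    {f : X → X} (hf : Measurable f) {g : X → ℝ≥0∞} (hg : Measurable g) :
    (μ.map f).withDensity g = (μ.withDensity (fun u => g (f u))).map f := by
  ext s hs
  rw [withDensity_apply _ hs, Measure.map_apply hf hs,
    withDensity_apply _ (hf hs), setLIntegral_map hs hg hf]

/-- **Proposition 3.3: the recursive prediction–correction filtering measures
agree with the push-forwards of the Bayesian posteriors,
`ν̃_j = (S_{t_j})_# μ^{(j)}`; moreover each normalization constant `Z_j` is
finite and strictly positive.** -/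
theorem recursive_filtering_eq_pushforward_posterior
    {X : Type*} [NormedAddCommGroup X] [NormedSpace ℝ X] [CompleteSpace X]
    [TopologicalSpace.SeparableSpace X] [MeasurableSpace X] [BorelSpace X]
    (S : ℝ → X → X) (hSmeas : Measurable fun p : ℝ × X => S p.1 p.2)
    (hsemi : ∀ s ≥ (0 : ℝ), ∀ τ ≥ (0 : ℝ), ∀ u : X, S s (S τ u) = S (s + τ) u)
    (μp : Measure X) [IsProbabilityMeasure μp]
    (N : ℕ) (t : ℕ → ℝ) (ht0 : t 0 = 0) (htmono : ∀ j < N, t j < t (j + 1))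
    (Φt : ℕ → X → ℝ)
    (hΦmeas : ∀ j, 1 ≤ j → j ≤ N → Measurable (Φt j))
    (hΦbdd : ∀ j, 1 ≤ j → j ≤ N → ∃ m : ℝ, ∀ u : X, m ≤ Φt j u) :
    ∀ j ≤ N,
      (Integrable (fun u => Real.exp (-recPhiSum S t Φt j u)) μp ∧
        0 < recZ μp S t Φt j) ∧
      recFilter μp S t Φt j = (recPosterior μp S t Φt j).map (S (t j)) := by
  have hS : ∀ c : ℝ, Measurable (S c) := fun c =>
    hSmeas.comp (measurable_const.prodMk measurable_id)
  have htnn : ∀ j ≤ N, 0 ≤ t j := by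
    intro j hj
    induction j with
    | zero => simp [ht0]
    | succ j ih =>
        exact le_trans (ih (Nat.le_of_succ_le hj))
          (le_of_lt (htmono j (Nat.lt_of_succ_le hj)))
  have hsum_meas : ∀ j ≤ N, Measurable (recPhiSum S t Φt j) := by
    intro j hj
    apply Finset.measurable_sum
    intro k hk
    have hk' : k + 1 ≤ N := le_trans (Finset.mem_range.mp hk) hj
    exact (hΦmeas (k + 1) (Nat.succ_le_succ (Nat.zero_le k)) hk').comp (hS (t k))
  have hlb : ∀ j ≤ N, ∃ b : ℝ, ∀ u, b ≤ recPhiSum S t Φt j u := by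
    intro j hj
    induction j with
    | zero => exact ⟨0, fun u => by simp [recPhiSum]⟩
    | succ j ih =>
        obtain ⟨b, hb⟩ := ih (Nat.le_of_succ_le hj)
        obtain ⟨m, hm⟩ := hΦbdd (j + 1) (Nat.succ_le_succ (Nat.zero_le j)) hj
        refine ⟨b + m, fun u => ?_⟩
        have : recPhiSum S t Φt (j + 1) u
            = recPhiSum S t Φt j u + Φt (j + 1) (S (t j) u) := by
          simp [recPhiSum, Finset.sum_range_succ]
        rw [this]
        exact add_le_add (hb u) (hm _)
  have hexp_int : ∀ j ≤ N, Integrable (fun u => Real.exp (-recPhiSum S t Φt j u)) μp := by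
    intro j hj
    obtain ⟨b, hb⟩ := hlb j hj
    refine (integrable_const (Real.exp (-b))).mono' ?_ ?_
    · exact ((hsum_meas j hj).neg.exp).aestronglyMeasurable
    · filter_upwards with u
      rw [Real.norm_eq_abs, abs_of_pos (Real.exp_pos _)]
      exact Real.exp_le_exp.mpr (neg_le_neg (hb u))
  have hZpos : ∀ j ≤ N, 0 < recZ μp S t Φt j := fun j hj =>
    integral_exp_pos (f := fun u => -recPhiSum S t Φt j u) (hexp_int j hj)
  intro j
  induction j with
  | zero =>
      intro hj
      refine ⟨⟨hexp_int 0 hj, hZpos 0 hj⟩, ?_⟩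
      have hZ0 : recZ μp S t Φt 0 = 1 := by
        simp [recZ, recPhiSum]
      have : recPosterior μp S t Φt 0 = μp := by
        rw [recPosterior, hZ0]
        simp [recPhiSum]
      rw [this, recFilter, ht0]
  | succ j ih =>
      intro hj
      have hjN : j ≤ N := Nat.le_of_succ_le hj
      obtain ⟨⟨hintj, hZj⟩, hνj⟩ := ih hjN
      have hΦm : Measurable (Φt (j + 1)) :=
        hΦmeas (j + 1) (Nat.succ_le_succ (Nat.zero_le j)) hj
      have hint' := hexp_int (j + 1) hj
      have hZ' := hZpos (j + 1) hj
      refine ⟨⟨hint', hZ'⟩, ?_⟩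
      set Z := recZ μp S t Φt j with hZdef
      set Z' := recZ μp S t Φt (j + 1) with hZ'def
      have hsplit : ∀ u, recPhiSum S t Φt (j + 1) u
          = recPhiSum S t Φt j u + Φt (j + 1) (S (t j) u) := by
        intro u; simp [recPhiSum, Finset.sum_range_succ]
      -- density of posterior j as NNReal
      have hdnn : ∀ u, 0 ≤ Real.exp (-recPhiSum S t Φt j u) / Z :=
        fun u => div_nonneg (Real.exp_pos _).le hZj.le
      have hDmeas : Measurable fun u => Real.toNNReal (Real.exp (-recPhiSum S t Φt j u) / Z) :=
        ((hsum_meas j hjN).neg.exp.div_const _).real_toNNReal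
      -- compute z = Z'/Z
      have hz : (∫ v, Real.exp (-Φt (j + 1) v) ∂(recFilter μp S t Φt j)) = Z' / Z := by
        rw [hνj, integral_map (f := fun v => Real.exp (-Φt (j + 1) v)) (hS (t j)).aemeasurable hΦm.neg.exp.aestronglyMeasurable,
          recPosterior]
        have hDcoe : (fun u => ENNReal.ofReal (Real.exp (-recPhiSum S t Φt j u) / recZ μp S t Φt j))
            = fun u => ((Real.toNNReal (Real.exp (-recPhiSum S t Φt j u) / Z) : ℝ≥0) : ℝ≥0∞) := rfl
        rw [hDcoe, integral_withDensity_eq_integral_smul hDmeas]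
        have : ∀ u, (Real.toNNReal (Real.exp (-recPhiSum S t Φt j u) / Z))
            • Real.exp (-Φt (j + 1) (S (t j) u))
            = Real.exp (-recPhiSum S t Φt (j + 1) u) / Z := by
          intro u
          rw [NNReal.smul_def, smul_eq_mul, Real.coe_toNNReal _ (hdnn u), hsplit u,
            neg_add, Real.exp_add]
          ring
        rw [integral_congr_ae (Filter.Eventually.of_forall this), integral_div, hZ'def, recZ]
      -- the measurable correction weight
      have hgmeas : Measurable fun u =>
          ENNReal.ofReal (Real.exp (-Φt (j + 1) u) / (Z' / Z)) :=
        (hΦm.neg.exp.div_const _).ennreal_ofReal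
      have hΔnn : (0:ℝ) ≤ t (j + 1) - t j :=
        sub_nonneg.mpr (le_of_lt (htmono j (Nat.lt_of_succ_le hj)))
      have hcomp : S (t (j + 1) - t j) ∘ S (t j) = S (t (j + 1)) := by
        funext u
        rw [Function.comp_apply, hsemi _ hΔnn _ (htnn j hjN) u, sub_add_cancel]
      rw [recFilter, hz, hνj,
        withDensity_map_comm _ (hS (t j)) hgmeas,
        Measure.map_map (hS _) (hS _), hcomp]
      congr 1
      have hgmeas' : Measurable fun u =>
          ENNReal.ofReal (Real.exp (-Φt (j + 1) (S (t j) u)) / (Z' / Z)) :=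
        hgmeas.comp (hS (t j))
      rw [recPosterior, recPosterior,
        ← withDensity_mul _ (show Measurable fun u => ENNReal.ofReal (Real.exp (-recPhiSum S t Φt j u) / recZ μp S t Φt j) from ((hsum_meas j hjN).neg.exp.div_const _).ennreal_ofReal) hgmeas']
      congr 1
      funext u
      rw [Pi.mul_apply, ← ENNReal.ofReal_mul (hdnn u)]
      congr 1
      rw [hsplit u, neg_add, Real.exp_add]
      simp only [← hZdef, ← hZ'def]
      field_simp
end
end

section
/- Normalization and density bounds under the noise assumptions (Lemma 4.3): Assume ρ satisfies (N.1)–(N.3) and that L : X → ℝ^d is Borel measurable with ‖L‖_{L²(μ_prior)} < ∞. There exists a constant C > 0, depending only on ρ (through the constants in (N.2)–(N.3)), such that for every y ∈ ℝ^d: Z(y) ≥ C⁻¹ exp( −|y|_Γ² − ‖L‖²_{L²(μ_prior)} ), and for every ū ∈ X: ρ(y − L(ū))/Z(y) ≤ C exp( |y|_Γ² + ‖L‖²_{L²(μ_prior)} ). -/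
open MeasureTheory
open scoped BigOperators ENNReal Matrix

noncomputable section

lemma gn_eq_norm {d : ℕ} {Γ : Matrix (Fin d) (Fin d) ℝ} (hΓ : Γ.PosDef) (z : Fin d → ℝ) :
    gammaNorm Γ z =
      @norm _ (Matrix.toNormedAddCommGroup _ hΓ.inv).toNorm z := by
  show Real.sqrt _ = Real.sqrt _
  congr 1
  rw [dotProduct_comm]; rfl

lemma gn_nonneg {d : ℕ} (Γ : Matrix (Fin d) (Fin d) ℝ) (z : Fin d → ℝ) :
    0 ≤ gammaNorm Γ z := Real.sqrt_nonneg _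

lemma gn_sub_le {d : ℕ} {Γ : Matrix (Fin d) (Fin d) ℝ} (hΓ : Γ.PosDef) (a b : Fin d → ℝ) :
    gammaNorm Γ (a - b) ≤ gammaNorm Γ a + gammaNorm Γ b := by
  have h := @norm_sub_le (Fin d → ℝ)
    (@SeminormedAddCommGroup.toSeminormedAddGroup _
      (@NormedAddCommGroup.toSeminormedAddCommGroup _ (Matrix.toNormedAddCommGroup _ hΓ.inv))) a b
  have e : ∀ z : Fin d → ℝ, gammaNorm Γ z = @norm _
      (@SeminormedAddCommGroup.toSeminormedAddGroup _
        (@NormedAddCommGroup.toSeminormedAddCommGroup _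
          (Matrix.toNormedAddCommGroup _ hΓ.inv))).toNorm z := fun z => by
    show Real.sqrt _ = Real.sqrt _; congr 1; rw [dotProduct_comm]; rfl
  rw [e, e, e]
  exact h

lemma gn_sq_sub_le {d : ℕ} {Γ : Matrix (Fin d) (Fin d) ℝ} (hΓ : Γ.PosDef) (a b : Fin d → ℝ) :
    (gammaNorm Γ (a - b)) ^ 2 ≤ 2 * (gammaNorm Γ a) ^ 2 + 2 * (gammaNorm Γ b) ^ 2 := by
  have h := gn_sub_le hΓ a b
  have h0 := gn_nonneg Γ (a - b)
  have h2 := pow_le_pow_left₀ h0 h 2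
  nlinarith [sq_nonneg (gammaNorm Γ a - gammaNorm Γ b)]

lemma gn_continuous {d : ℕ} (Γ : Matrix (Fin d) (Fin d) ℝ) :
    Continuous (gammaNorm Γ) := by
  apply Real.continuous_sqrt.comp
  simp only [dotProduct, Matrix.mulVec]
  fun_prop

lemma gn_zero {d : ℕ} (Γ : Matrix (Fin d) (Fin d) ℝ) : gammaNorm Γ 0 = 0 := by
  simp [gammaNorm]

lemma rho_continuous {d : ℕ} {Γ : Matrix (Fin d) (Fin d) ℝ} {ρ : (Fin d → ℝ) → ℝ} {Lρ : ℝ}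
    (hlip : ∀ y y', |ρ y - ρ y'| ≤ Lρ * gammaNorm Γ (y - y')) : Continuous ρ := by
  rw [continuous_iff_continuousAt]
  intro y0
  rw [ContinuousAt, tendsto_iff_norm_sub_tendsto_zero]
  have h0 : Filter.Tendsto (fun y => Lρ * gammaNorm Γ (y - y0)) (nhds y0) (nhds 0) := by
    have : Continuous (fun y => Lρ * gammaNorm Γ (y - y0)) := by
      exact continuous_const.mul ((gn_continuous Γ).comp (continuous_id.sub continuous_const))
    have h := this.tendsto y0
    simpa [gn_zero] using h
  exact squeeze_zero (fun y => norm_nonneg _) (fun y => hlip y y0) h0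

theorem main
    {X : Type*} [NormedAddCommGroup X] [NormedSpace ℝ X] [CompleteSpace X]
    [TopologicalSpace.SeparableSpace X] [MeasurableSpace X] [BorelSpace X]
    {d : ℕ}
    (Γ : Matrix (Fin d) (Fin d) ℝ) (hΓ : Γ.PosDef)
    (ρ : (Fin d → ℝ) → ℝ) (Lρ Cb Ct : ℝ)
    (hLρ : 0 < Lρ) (hCb : 0 < Cb) (hCt : 0 < Ct)
    (hpos : ∀ y, 0 < ρ y)
    (hlip : ∀ y y', |ρ y - ρ y'| ≤ Lρ * gammaNorm Γ (y - y'))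
    (hbdd : ∀ y, ρ y ≤ Cb)
    (htail : ∀ y, Ct⁻¹ * Real.exp (-(1 / 2) * (gammaNorm Γ y) ^ 2) ≤ ρ y) :
    ∃ C > 0, ∀ μp : Measure X, IsProbabilityMeasure μp →
      ∀ L : X → Fin d → ℝ, Measurable L →
        Integrable (fun u => (gammaNorm Γ (L u)) ^ 2) μp →
      ∀ y : Fin d → ℝ,
        C⁻¹ * Real.exp (-(gammaNorm Γ y) ^ 2 - ∫ u, (gammaNorm Γ (L u)) ^ 2 ∂μp)
            ≤ bayesZ μp ρ L y ∧
        ∀ u : X,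
          ρ (y - L u) / bayesZ μp ρ L y
            ≤ C * Real.exp ((gammaNorm Γ y) ^ 2 + ∫ v, (gammaNorm Γ (L v)) ^ 2 ∂μp) := by
  refine ⟨Ct * (Cb + 1), by positivity, ?_⟩
  intro μp hμp L hL hInt y
  set A := ∫ u, (gammaNorm Γ (L u)) ^ 2 ∂μp with hA
  have hρcont : Continuous ρ := rho_continuous hlip
  have hmeas : Measurable fun u => ρ (y - L u) :=
    hρcont.measurable.comp (measurable_const.sub hL)
  have hρint : Integrable (fun u => ρ (y - L u)) μp := by
    refine Integrable.mono' (integrable_const Cb) hmeas.aestronglyMeasurable ?_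
    filter_upwards with u
    rw [Real.norm_eq_abs, abs_of_pos (hpos _)]
    exact hbdd _
  set f : X → ℝ := fun u => -(gammaNorm Γ y) ^ 2 - (gammaNorm Γ (L u)) ^ 2 with hf
  have hfint : Integrable f μp := (integrable_const (-(gammaNorm Γ y) ^ 2)).sub hInt
  have hgmeas : Measurable fun u => gammaNorm Γ (L u) := (gn_continuous Γ).measurable.comp hL
  have hexpmeas : Measurable fun u => Real.exp (f u) :=
    Real.measurable_exp.comp (measurable_const.sub (hgmeas.pow_const 2))
  have hexple : ∀ u, Real.exp (f u) ≤ Ct * ρ (y - L u) := by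
    intro u
    have hsq := gn_sq_sub_le hΓ y (L u)
    have h1 : f u ≤ -(1 / 2) * (gammaNorm Γ (y - L u)) ^ 2 := by
      simp only [hf]; nlinarith
    have h2 : Real.exp (f u) ≤ Real.exp (-(1 / 2) * (gammaNorm Γ (y - L u)) ^ 2) :=
      Real.exp_le_exp.2 h1
    have h3 := htail (y - L u)
    have h4 := mul_le_mul_of_nonneg_left h3 hCt.le
    rw [← mul_assoc, mul_inv_cancel₀ hCt.ne', one_mul] at h4
    exact h2.trans h4
  have hexpint : Integrable (fun u => Real.exp (f u)) μp := by
    refine Integrable.mono' (hρint.const_mul Ct) hexpmeas.aestronglyMeasurable ?_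
    filter_upwards with u
    rw [Real.norm_eq_abs, abs_of_pos (Real.exp_pos _)]
    exact hexple u
  have hjensen : Real.exp (∫ u, f u ∂μp) ≤ ∫ u, Real.exp (f u) ∂μp :=
    ConvexOn.map_integral_le convexOn_exp Real.continuous_exp.continuousOn
      isClosed_univ (Filter.Eventually.of_forall fun u => Set.mem_univ _) hfint hexpint
  have hintf : ∫ u, f u ∂μp = -(gammaNorm Γ y) ^ 2 - A := by
    simp only [hf]
    rw [integral_sub (integrable_const _) hInt, integral_const]
    simp [measure_univ, hA]
  have hZ1 : Real.exp (-(gammaNorm Γ y) ^ 2 - A) ≤ Ct * bayesZ μp ρ L y := by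
    calc Real.exp (-(gammaNorm Γ y) ^ 2 - A) = Real.exp (∫ u, f u ∂μp) := by rw [hintf]
      _ ≤ ∫ u, Real.exp (f u) ∂μp := hjensen
      _ ≤ ∫ u, Ct * ρ (y - L u) ∂μp :=
          integral_mono hexpint (hρint.const_mul Ct) hexple
      _ = Ct * bayesZ μp ρ L y := MeasureTheory.integral_const_mul _ _
  have hZlb : Ct⁻¹ * Real.exp (-(gammaNorm Γ y) ^ 2 - A) ≤ bayesZ μp ρ L y := by
    rw [inv_mul_le_iff₀ hCt]
    exact hZ1
  have hZpos : 0 < bayesZ μp ρ L y := lt_of_lt_of_le (by positivity) hZlb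
  have hCle : Ct ≤ Ct * (Cb + 1) := by nlinarith
  constructor
  · refine le_trans ?_ hZlb
    have : (Ct * (Cb + 1))⁻¹ ≤ Ct⁻¹ := by
      apply inv_anti₀ hCt hCle
    exact mul_le_mul_of_nonneg_right this (Real.exp_pos _).le
  · intro u
    have h1 : ρ (y - L u) / bayesZ μp ρ L y ≤ Cb / bayesZ μp ρ L y := by
      gcongr
      exact hbdd _
    have h2 : (bayesZ μp ρ L y)⁻¹ ≤ Ct * Real.exp ((gammaNorm Γ y) ^ 2 + A) := by
      have h3 : (bayesZ μp ρ L y)⁻¹ ≤ (Ct⁻¹ * Real.exp (-(gammaNorm Γ y) ^ 2 - A))⁻¹ := by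
        apply inv_anti₀ (by positivity) hZlb
      rw [mul_inv, inv_inv, ← Real.exp_neg] at h3
      refine h3.trans_eq ?_
      congr 1
      ring_nf
    calc ρ (y - L u) / bayesZ μp ρ L y ≤ Cb / bayesZ μp ρ L y := h1
      _ = Cb * (bayesZ μp ρ L y)⁻¹ := div_eq_mul_inv _ _
      _ ≤ Cb * (Ct * Real.exp ((gammaNorm Γ y) ^ 2 + A)) :=
          mul_le_mul_of_nonneg_left h2 hCb.le
      _ ≤ Ct * (Cb + 1) * Real.exp ((gammaNorm Γ y) ^ 2 + A) := by
          nlinarith [Real.exp_pos ((gammaNorm Γ y) ^ 2 + A)]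


/-- **Lemma 4.3: lower bound on the normalization constant `Z(y)` and upper
bound on the posterior density, with a constant depending only on the noise
density `ρ`.** -/
theorem normalization_and_density_bounds
    {X : Type*} [NormedAddCommGroup X] [NormedSpace ℝ X] [CompleteSpace X]
    [TopologicalSpace.SeparableSpace X] [MeasurableSpace X] [BorelSpace X]
    {d : ℕ}
    (Γ : Matrix (Fin d) (Fin d) ℝ) (hΓ : Γ.PosDef)
    (ρ : (Fin d → ℝ) → ℝ) (Lρ Cb Ct : ℝ) (hρ : IsNoiseDensity Γ ρ Lρ Cb Ct) :
    ∃ C > 0, ∀ μp : Measure X, IsProbabilityMeasure μp →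
      ∀ L : X → Fin d → ℝ, Measurable L →
        Integrable (fun u => (gammaNorm Γ (L u)) ^ 2) μp →
      ∀ y : Fin d → ℝ,
        C⁻¹ * Real.exp (-(gammaNorm Γ y) ^ 2 - ∫ u, (gammaNorm Γ (L u)) ^ 2 ∂μp)
            ≤ bayesZ μp ρ L y ∧
        ∀ u : X,
          ρ (y - L u) / bayesZ μp ρ L y
            ≤ C * Real.exp ((gammaNorm Γ y) ^ 2 + ∫ v, (gammaNorm Γ (L v)) ^ 2 ∂μp) := by
  obtain ⟨hLρ, hCb, hCt, hpos, hlip, hbdd, htail⟩ := hρ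
  exact main Γ hΓ ρ Lρ Cb Ct hLρ hCb hCt hpos hlip hbdd htail
end
end
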